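/- For the HREM with σ > 0 and any β ≥ 0, the thermodynamic limit of the quenched free energy f = lim_{k→∞} f_{k+1} exists (and is finite). -/

import Mathlib

open MeasureTheory ProbabilityTheory Real Filter

/-- A configuration of `2 ^ n` Ising spins (each spin is a Boolean). -/
abbrev Cfg (n : ℕ) : Type := Fin (2 ^ n) → Bool

/-- The left half of a spin configuration. -/
def blkL {n : ℕ} (S : Cfg (n + 1)) : Cfg n :=
  fun i => S ⟨i.1, lt_of_lt_of_le i.2 (Nat.pow_le_pow_right (by norm_num) (Nat.le_succ n))⟩

/-- The right half of a spin configuration. -/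
def blkR {n : ℕ} (S : Cfg (n + 1)) : Cfg n :=
  fun i => S ⟨2 ^ n + i.1, by have := i.2; rw [pow_succ]; omega⟩

variable {Ω : Type} [MeasurableSpace Ω]

/-- The Hamiltonian of the hierarchical random energy model (HREM), defined recursively:
`H_{n+1}[S] = H_n¹[S₁] + H_n²[S₂] + 2^{(n+1)(1-σ)/2} ε_{n+1}[S]`, `H_0[S] = ε_0[S]`,
where the second argument indexes the hierarchical block (the two sub-blocks of block `j`
are `2j` and `2j+1`), so that the two half-Hamiltonians use disjoint (hence independent)
families of random energies. -/
noncomputable def hremH (σ : ℝ) (ε : ∀ l : ℕ, ℕ → Cfg l → Ω → ℝ) :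
    ∀ n : ℕ, ℕ → Cfg n → Ω → ℝ
  | 0 => fun j S => ε 0 j S
  | (n + 1) => fun j S ω =>
      hremH σ ε n (2 * j) (blkL S) ω + hremH σ ε n (2 * j + 1) (blkR S) ω
        + (2 : ℝ) ^ (((n : ℝ) + 1) * (1 - σ) / 2) * ε (n + 1) j S ω

/-- The partition function `Z_n = ∑_S exp (-β H_n[S])` of the HREM. -/
noncomputable def hremZ (σ : ℝ) (ε : ∀ l : ℕ, ℕ → Cfg l → Ω → ℝ) (β : ℝ) (n : ℕ)
    (ω : Ω) : ℝ :=
  ∑ S : Cfg n, Real.exp (-β * hremH σ ε n 0 S ω)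

/-- The quenched free energy `f_n = 2^{-n} E[log Z_n]` of the HREM. -/
noncomputable def hremF (σ : ℝ) (ε : ∀ l : ℕ, ℕ → Cfg l → Ω → ℝ) (μ : Measure Ω)
    (β : ℝ) (n : ℕ) : ℝ :=
  ((2 : ℝ) ^ n)⁻¹ * ∫ ω, Real.log (hremZ σ ε β n ω) ∂μ

set_option linter.unusedSectionVars false
set_option linter.unusedVariables false

/-- Splitting a configuration into halves is a bijection. -/
def cfgPair {n : ℕ} : Cfg (n + 1) ≃ Cfg n × Cfg n where
  toFun S := (blkL S, blkR S)
  invFun p i := if h : (i : ℕ) < 2 ^ n then p.1 ⟨i, h⟩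
    else p.2 ⟨(i : ℕ) - 2 ^ n, by have h2 := i.2; have hp : (2:ℕ) ^ (n+1) = 2 ^ n * 2 := pow_succ 2 n; omega⟩
  left_inv S := by
    funext i
    by_cases h : (i : ℕ) < 2 ^ n
    · simp only [h, dif_pos, blkL]
    · simp only [h, dif_neg, not_false_iff, blkR]
      congr 1
      exact Fin.ext (by simp; omega)
  right_inv p := by
    ext i
    · simp only [blkL]
      have h : ((⟨(i : ℕ), lt_of_lt_of_le i.2 (Nat.pow_le_pow_right (by norm_num) (Nat.le_succ n))⟩ : Fin (2 ^ (n+1))) : ℕ) < 2 ^ n := i.2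
      simp only [h, dif_pos]
    · simp only [blkR]
      have h : ¬ (2 ^ n + (i : ℕ) < 2 ^ n) := by omega
      simp only [h, dif_neg, not_false_iff, Nat.add_sub_cancel_left, Fin.eta]

lemma sum_cfgPair {n : ℕ} (F G : Cfg n → ℝ) :
    ∑ S : Cfg (n + 1), F (blkL S) * G (blkR S) = (∑ a : Cfg n, F a) * (∑ b : Cfg n, G b) := by
  rw [Finset.sum_mul_sum, ← Fintype.sum_prod_type']
  exact Fintype.sum_equiv cfgPair _ _ (fun S => rfl)

/-- Deterministic version of the HREM Hamiltonian, as a function of a field of values. -/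
noncomputable def fieldH (σ : ℝ) : ∀ n : ℕ, ℕ → Cfg n → ((l : ℕ) → ℕ → Cfg l → ℝ) → ℝ
  | 0 => fun j S x => x 0 j S
  | (n + 1) => fun j S x =>
      fieldH σ n (2 * j) (blkL S) x + fieldH σ n (2 * j + 1) (blkR S) x
        + (2 : ℝ) ^ (((n : ℝ) + 1) * (1 - σ) / 2) * x (n + 1) j S

variable {Ω : Type} [MeasurableSpace Ω]

lemma hremH_eq_fieldH (σ : ℝ) (ε : ∀ l : ℕ, ℕ → Cfg l → Ω → ℝ) :
    ∀ (n : ℕ) (j : ℕ) (S : Cfg n) (ω : Ω),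
      hremH σ ε n j S ω = fieldH σ n j S (fun l b c => ε l b c ω) := by
  intro n
  induction n with
  | zero => intro j S ω; rfl
  | succ n ih => intro j S ω; simp only [hremH, fieldH, ih]

/-- `fieldH` only depends on the field values in the subtree below block `j`,
in a translation-equivariant way. -/
lemma fieldH_congr (σ : ℝ) : ∀ (n j j' : ℕ) (x x' : (l : ℕ) → ℕ → Cfg l → ℝ),
    (∀ (l m : ℕ) (c : Cfg l), l ≤ n → m < 2 ^ (n - l) →
      x l (j * 2 ^ (n - l) + m) c = x' l (j' * 2 ^ (n - l) + m) c) →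
    ∀ S : Cfg n, fieldH σ n j S x = fieldH σ n j' S x' := by
  intro n
  induction n with
  | zero =>
    intro j j' x x' h S
    have := h 0 0 S le_rfl (by norm_num)
    simpa [fieldH] using this
  | succ n ih =>
    intro j j' x x' h S
    have hpow : ∀ l : ℕ, l ≤ n → 2 ^ (n + 1 - l) = 2 * 2 ^ (n - l) := by
      intro l hl
      rw [show n + 1 - l = (n - l) + 1 by omega, pow_succ]
      ring
    simp only [fieldH]
    have h1 : ∀ (l m : ℕ) (c : Cfg l), l ≤ n → m < 2 ^ (n - l) →
        x l (2 * j * 2 ^ (n - l) + m) c = x' l (2 * j' * 2 ^ (n - l) + m) c := by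
      intro l m c hl hm
      have hp := hpow l hl
      have e1 : 2 * j * 2 ^ (n - l) + m = j * 2 ^ (n + 1 - l) + m := by rw [hp]; ring
      have e2 : 2 * j' * 2 ^ (n - l) + m = j' * 2 ^ (n + 1 - l) + m := by rw [hp]; ring
      rw [e1, e2]
      exact h l m c (by omega) (by omega)
    have h2 : ∀ (l m : ℕ) (c : Cfg l), l ≤ n → m < 2 ^ (n - l) →
        x l ((2 * j + 1) * 2 ^ (n - l) + m) c = x' l ((2 * j' + 1) * 2 ^ (n - l) + m) c := by
      intro l m c hl hm
      have hp := hpow l hl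
      have e1 : (2 * j + 1) * 2 ^ (n - l) + m = j * 2 ^ (n + 1 - l) + (2 ^ (n - l) + m) := by
        rw [hp]; ring
      have e2 : (2 * j' + 1) * 2 ^ (n - l) + m = j' * 2 ^ (n + 1 - l) + (2 ^ (n - l) + m) := by
        rw [hp]; ring
      rw [e1, e2]
      exact h l (2 ^ (n - l) + m) c (by omega) (by omega)
    have htop : x (n + 1) j S = x' (n + 1) j' S := by
      have := h (n + 1) 0 S le_rfl (by norm_num)
      simpa using this
    rw [ih (2 * j) (2 * j') x x' h1 (blkL S), ih (2 * j + 1) (2 * j' + 1) x x' h2 (blkR S), htop]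
/-- The finite index set of random energies used by a level-`n` Hamiltonian. -/
abbrev hremIdx (n : ℕ) : Type := Σ l : Fin (n + 1), Fin (2 ^ (n - (l : ℕ))) × Cfg (l : ℕ)

/-- Embedding of the index set of the subtree below block `j` at level `n` into the
global index set. -/
def hremEmb (n j : ℕ) (i : hremIdx n) : Σ l : ℕ, ℕ × Cfg l :=
  ⟨(i.1 : ℕ), (j * 2 ^ (n - (i.1 : ℕ)) + (i.2.1 : ℕ), i.2.2)⟩

lemma hremEmb_injective (n j : ℕ) : Function.Injective (hremEmb n j) := by
  rintro ⟨l₁, m₁, c₁⟩ ⟨l₂, m₂, c₂⟩ hab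
  have h1 : (l₁ : ℕ) = (l₂ : ℕ) := congrArg Sigma.fst hab
  have hl : l₁ = l₂ := Fin.ext h1
  subst hl
  have h2 : (⟨j * 2 ^ (n - (l₁ : ℕ)) + (m₁ : ℕ), c₁⟩ : ℕ × Cfg (l₁ : ℕ))
      = ⟨j * 2 ^ (n - (l₁ : ℕ)) + (m₂ : ℕ), c₂⟩ := by
    have := (Sigma.mk.inj_iff.mp hab).2
    exact eq_of_heq this
  have hm : (m₁ : ℕ) = (m₂ : ℕ) := by
    have := (Prod.mk.injEq _ _ _ _).mp h2
    omega
  have hc : c₁ = c₂ := (Prod.mk.injEq _ _ _ _ |>.mp h2).2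
  simp [Fin.ext hm, hc]

/-- Extend a finite collection of field values to a full field (by zero). -/
noncomputable def extField (n : ℕ) (x : hremIdx n → ℝ) : (l : ℕ) → ℕ → Cfg l → ℝ :=
  fun l b c => if h : l < n + 1 ∧ b < 2 ^ (n - l) then x ⟨⟨l, h.1⟩, (⟨b, h.2⟩, c)⟩ else 0

variable {Ω : Type} [MeasurableSpace Ω]

lemma hremH_factor (σ : ℝ) (ε : ∀ l : ℕ, ℕ → Cfg l → Ω → ℝ) (n j : ℕ) (S : Cfg n) (ω : Ω) :
    hremH σ ε n j S ω
      = fieldH σ n 0 S (extField n (fun i => ε (hremEmb n j i).1 (hremEmb n j i).2.1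
          (hremEmb n j i).2.2 ω)) := by
  rw [hremH_eq_fieldH]
  apply fieldH_congr σ n j 0
  intro l m c hl hm
  have hcond : l < n + 1 ∧ 0 * 2 ^ (n - l) + m < 2 ^ (n - l) := by constructor <;> omega
  simp only [extField, hcond, dif_pos, hremEmb]
  congr 1
  omega

lemma measurable_fieldH (σ : ℝ) : ∀ (n j : ℕ) (S : Cfg n),
    Measurable (fun x : (l : ℕ) → ℕ → Cfg l → ℝ => fieldH σ n j S x) := by
  intro n
  induction n with
  | zero =>
    intro j S
    exact (measurable_pi_apply S).comp ((measurable_pi_apply j).comp (measurable_pi_apply 0))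
  | succ n ih =>
    intro j S
    simp only [fieldH]
    refine ((ih _ _).add (ih _ _)).add (Measurable.const_mul ?_ _)
    exact (measurable_pi_apply S).comp ((measurable_pi_apply j).comp (measurable_pi_apply (n+1)))

lemma measurable_extField (n : ℕ) : Measurable (extField n) := by
  refine measurable_pi_lambda _ fun l => measurable_pi_lambda _ fun b =>
    measurable_pi_lambda _ fun c => ?_
  by_cases h : l < n + 1 ∧ b < 2 ^ (n - l)
  · simpa [extField, h] using measurable_pi_apply (⟨⟨l, h.1⟩, (⟨b, h.2⟩, c)⟩ : hremIdx n)
  · simp only [extField, h, dif_neg, not_false_iff]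
    exact measurable_const

section Prob

variable {Ω : Type} [MeasurableSpace Ω] {μ : Measure Ω}

/-- A subfamily (along an injective map) of an independent family is independent. -/
lemma iIndepFun_precomp {ι' ι : Type*} {f : ι → Ω → ℝ}
    (hind : iIndepFun f μ) {g : ι' → ι} (hg : Function.Injective g) :
    iIndepFun (fun k => f (g k)) μ := by
  classical
  rw [iIndepFun_iff_measure_inter_preimage_eq_mul]
  intro S sets hsets
  set sets' : ι → Set ℝ := fun i => ⋂ k ∈ S.filter (fun k => g k = i), sets k with hsets'
  have hfilter : ∀ k ∈ S, S.filter (fun k' => g k' = g k) = {k} := by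
    intro k hk
    ext k'
    simp only [Finset.mem_filter, Finset.mem_singleton]
    constructor
    · rintro ⟨_, h⟩; exact hg h
    · rintro rfl; exact ⟨hk, rfl⟩
  have hkey : ∀ k ∈ S, sets' (g k) = sets k := by
    intro k hk
    rw [hsets']
    simp only [hfilter k hk]
    simp
  have hmeas' : ∀ i ∈ S.image g, MeasurableSet (sets' i) := by
    intro i _
    exact MeasurableSet.biInter (Finset.countable_toSet _)
      (fun k hk => hsets k (Finset.mem_filter.mp hk).1)
  have h1 : (⋂ k ∈ S, f (g k) ⁻¹' sets k) = ⋂ i ∈ S.image g, f i ⁻¹' sets' i := by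
    rw [Finset.set_biInter_finset_image]
    exact Set.iInter₂_congr fun k hk => by rw [hkey k hk]
  rw [h1, hind.measure_inter_preimage_eq_mul (S.image g) hmeas',
    Finset.prod_image (fun a ha b hb h => hg h)]
  exact Finset.prod_congr rfl fun k hk => by rw [hkey k hk]

/-- The law of a finite independent family is the product of its marginal laws. -/
lemma iIndepFun_map_pi {κ : Type*} [Fintype κ] {X : κ → Ω → ℝ} [IsProbabilityMeasure μ]
    (hX : ∀ k, Measurable (X k))
    (hind : iIndepFun X μ) :
    μ.map (fun ω k => X k ω) = Measure.pi (fun k => μ.map (X k)) := by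
  haveI : ∀ k, IsProbabilityMeasure (μ.map (X k)) :=
    fun k => Measure.isProbabilityMeasure_map (hX k).aemeasurable
  refine (Measure.pi_eq fun s hs => ?_).symm
  rw [Measure.map_apply (measurable_pi_lambda _ hX) (MeasurableSet.univ_pi hs)]
  have h1 : (fun ω k => X k ω) ⁻¹' Set.pi Set.univ s = ⋂ k ∈ Finset.univ, X k ⁻¹' s k := by
    ext ω; simp [Set.mem_pi]
  rw [h1, hind.measure_inter_preimage_eq_mul Finset.univ (fun k _ => hs k)]
  exact Finset.prod_congr rfl fun k _ => (Measure.map_apply (hX k) (hs k)).symm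

/-- Pointwise identity: `exp (t x) * φ₀(x) = exp (t²/2) * φ_t(x)`. -/
lemma exp_mul_gaussianPDFReal (t x : ℝ) :
    Real.exp (t * x) * gaussianPDFReal 0 1 x = Real.exp (t ^ 2 / 2) * gaussianPDFReal t 1 x := by
  simp only [gaussianPDFReal]
  push_cast
  rw [mul_comm (Real.exp (t * x)), mul_assoc, ← Real.exp_add,
    show -(x - 0) ^ 2 / (2 * 1) + t * x = t ^ 2 / 2 + -(x - t) ^ 2 / (2 * 1) from by ring,
    Real.exp_add]
  ring

lemma gaussianReal_std_eq : gaussianReal 0 1 = (volume : Measure ℝ).withDensity (gaussianPDF 0 1) := by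
  rw [gaussianReal_of_var_ne_zero 0 one_ne_zero]

lemma integrable_exp_mul_gaussianReal (t : ℝ) :
    Integrable (fun x => Real.exp (t * x)) (gaussianReal 0 1) := by
  rw [gaussianReal_std_eq]
  rw [integrable_withDensity_iff (measurable_gaussianPDF 0 1)
    (ae_of_all _ fun x => ENNReal.ofReal_lt_top)]
  have : (fun x => Real.exp (t * x) * (gaussianPDF 0 1 x).toReal)
      = fun x => Real.exp (t ^ 2 / 2) * gaussianPDFReal t 1 x := by
    funext x
    rw [gaussianPDF, ENNReal.toReal_ofReal (gaussianPDFReal_nonneg 0 1 x)]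
    exact exp_mul_gaussianPDFReal t x
  rw [this]
  exact (integrable_gaussianPDFReal t 1).const_mul _

lemma integral_exp_mul_gaussianReal (t : ℝ) :
    ∫ x, Real.exp (t * x) ∂(gaussianReal 0 1) = Real.exp (t ^ 2 / 2) := by
  rw [gaussianReal_std_eq]
  have hd : gaussianPDF 0 1 = fun x => ((((gaussianPDFReal 0 1 x).toNNReal) : NNReal) : ENNReal) :=
    funext fun x => rfl
  rw [hd, integral_withDensity_eq_integral_smul
    ((measurable_gaussianPDFReal 0 1).real_toNNReal)]
  have : (fun x => ((gaussianPDFReal 0 1 x).toNNReal) • Real.exp (t * x))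
      = fun x => Real.exp (t ^ 2 / 2) * gaussianPDFReal t 1 x := by
    funext x
    simp only [NNReal.smul_def, Real.coe_toNNReal _ (gaussianPDFReal_nonneg 0 1 x), smul_eq_mul]
    rw [mul_comm (gaussianPDFReal 0 1 x)]
    exact exp_mul_gaussianPDFReal t x
  rw [this, integral_const_mul, integral_gaussianPDFReal_eq_one t one_ne_zero, mul_one]

lemma integrable_id_gaussianReal : Integrable (fun x : ℝ => x) (gaussianReal 0 1) := by
  have h1 := _root_.integrable_exp_mul_gaussianReal 1
  have h2 := _root_.integrable_exp_mul_gaussianReal (-1)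
  refine Integrable.mono' (h1.add h2) measurable_id.aestronglyMeasurable (ae_of_all _ fun x => ?_)
  simp only [id, one_mul, neg_one_mul]
  rcases le_or_gt 0 x with h | h
  · calc |x| = x := abs_of_nonneg h
      _ ≤ Real.exp x := (Real.add_one_le_exp x).trans' (by linarith)
      _ ≤ Real.exp x + Real.exp (-x) := le_add_of_nonneg_right (Real.exp_nonneg _)
  · calc |x| = -x := abs_of_neg h
      _ ≤ Real.exp (-x) := (Real.add_one_le_exp (-x)).trans' (by linarith)
      _ ≤ Real.exp x + Real.exp (-x) := le_add_of_nonneg_left (Real.exp_nonneg _)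

end Prob

section Main

variable {Ω : Type} [MeasurableSpace Ω] {μ : Measure Ω} [IsProbabilityMeasure μ]
  {σ β : ℝ} {ε : ∀ l : ℕ, ℕ → Cfg l → Ω → ℝ}

lemma measurable_hremH (hmeas : ∀ l j c, Measurable (ε l j c)) :
    ∀ (n j : ℕ) (S : Cfg n), Measurable (hremH σ ε n j S) := by
  intro n
  induction n with
  | zero => intro j S; exact hmeas 0 j S
  | succ n ih =>
    intro j S
    exact ((ih _ _).add (ih _ _)).add ((hmeas _ _ _).const_mul _)

lemma integrable_eps (hmeas : ∀ l j c, Measurable (ε l j c))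
    (hgauss : ∀ l j c, μ.map (ε l j c) = gaussianReal 0 1) (l j : ℕ) (c : Cfg l) :
    Integrable (ε l j c) μ := by
  have h : Integrable id (μ.map (ε l j c)) := by
    rw [hgauss]; exact integrable_id_gaussianReal
  rw [integrable_map_measure measurable_id.aestronglyMeasurable (hmeas l j c).aemeasurable] at h
  exact h

lemma integrable_hremH (hmeas : ∀ l j c, Measurable (ε l j c))
    (hgauss : ∀ l j c, μ.map (ε l j c) = gaussianReal 0 1) :
    ∀ (n j : ℕ) (S : Cfg n), Integrable (hremH σ ε n j S) μ := by
  intro n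
  induction n with
  | zero => intro j S; exact integrable_eps hmeas hgauss 0 j S
  | succ n ih =>
    intro j S
    exact ((ih _ _).add (ih _ _)).add ((integrable_eps hmeas hgauss _ _ _).const_mul _)

/-- The level-`n`, block-`j` partition function. -/
noncomputable def hZ (σ : ℝ) (ε : ∀ l : ℕ, ℕ → Cfg l → Ω → ℝ) (β : ℝ) (n j : ℕ) (ω : Ω) : ℝ :=
  ∑ S : Cfg n, Real.exp (-β * hremH σ ε n j S ω)

lemma hZ_pos (n j : ℕ) (ω : Ω) : 0 < hZ σ ε β n j ω := by
  refine Finset.sum_pos (fun S _ => Real.exp_pos _) ?_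
  exact Finset.univ_nonempty

lemma measurable_logZ (hmeas : ∀ l j c, Measurable (ε l j c)) (n j : ℕ) :
    Measurable (fun ω => Real.log (hZ σ ε β n j ω)) := by
  apply Real.measurable_log.comp
  exact Finset.measurable_sum _ fun S _ =>
    ((measurable_hremH hmeas n j S).const_mul _).exp

lemma integrable_logZ (hmeas : ∀ l j c, Measurable (ε l j c))
    (hgauss : ∀ l j c, μ.map (ε l j c) = gaussianReal 0 1) (n j : ℕ) :
    Integrable (fun ω => Real.log (hZ σ ε β n j ω)) μ := by
  set N := (Fintype.card (Cfg n) : ℝ) with hN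
  have hN1 : (1 : ℝ) ≤ N := by
    rw [hN]; exact_mod_cast Fintype.card_pos
  set T : Ω → ℝ := fun ω => ∑ S : Cfg n, |(-β) * hremH σ ε n j S ω| with hT
  have hT0 : ∀ ω, 0 ≤ T ω := fun ω => Finset.sum_nonneg fun S _ => abs_nonneg _
  have hTint : Integrable T μ := integrable_finset_sum _ fun S _ =>
    (((integrable_hremH hmeas hgauss n j S).const_mul (-β)).abs)
  have hbound : ∀ ω, |Real.log (hZ σ ε β n j ω)| ≤ Real.log N + T ω := by
    intro ω
    have hterm : ∀ S : Cfg n, (-β) * hremH σ ε n j S ω ≤ T ω := by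
      intro S
      refine le_trans (le_abs_self _) ?_
      exact Finset.single_le_sum (f := fun S => |(-β) * hremH σ ε n j S ω|)
        (fun S _ => abs_nonneg _) (Finset.mem_univ S)
    have hup : hZ σ ε β n j ω ≤ N * Real.exp (T ω) := by
      rw [hZ]
      calc ∑ S : Cfg n, Real.exp (-β * hremH σ ε n j S ω)
          ≤ ∑ _S : Cfg n, Real.exp (T ω) :=
            Finset.sum_le_sum fun S _ => Real.exp_le_exp.mpr (hterm S)
        _ = N * Real.exp (T ω) := by simp [hN, mul_comm]
    have hlow : Real.exp (-(T ω)) ≤ hZ σ ε β n j ω := by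
      obtain ⟨S⟩ : Nonempty (Cfg n) := ⟨fun _ => true⟩
      refine le_trans ?_ (Finset.single_le_sum (f := fun S => Real.exp (-β * hremH σ ε n j S ω))
        (fun S _ => (Real.exp_pos _).le) (Finset.mem_univ S))
      refine Real.exp_le_exp.mpr ?_
      have := hterm S
      have habs : |(-β) * hremH σ ε n j S ω| ≤ T ω := by
        refine Finset.single_le_sum (f := fun S => |(-β) * hremH σ ε n j S ω|)
          (fun S _ => abs_nonneg _) (Finset.mem_univ S)
      have := neg_abs_le ((-β) * hremH σ ε n j S ω)
      linarith
    rw [abs_le]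
    constructor
    · have h1 : -(T ω) ≤ Real.log (hZ σ ε β n j ω) := by
        have := Real.log_le_log (Real.exp_pos _) hlow
        rwa [Real.log_exp] at this
      have h2 : (0:ℝ) ≤ Real.log N := Real.log_nonneg hN1
      linarith
    · have h1 := Real.log_le_log (hZ_pos n j ω) hup
      rwa [Real.log_mul (by linarith) (Real.exp_ne_zero _), Real.log_exp] at h1
  exact Integrable.mono' ((integrable_const (Real.log N)).add hTint)
    (measurable_logZ hmeas n j).aestronglyMeasurable (ae_of_all _ hbound)

end Main

section Main2

variable {Ω : Type} [MeasurableSpace Ω] {μ : Measure Ω} [IsProbabilityMeasure μ]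
  {σ β : ℝ} {ε : ∀ l : ℕ, ℕ → Cfg l → Ω → ℝ}

lemma u_repr (hmeas : ∀ l j c, Measurable (ε l j c))
    (hindep : iIndepFun
      (fun q : Σ l : ℕ, ℕ × Cfg l => ε q.1 q.2.1 q.2.2) μ)
    (hgauss : ∀ l j c, μ.map (ε l j c) = gaussianReal 0 1) (n j : ℕ) :
    ∫ ω, Real.log (hZ σ ε β n j ω) ∂μ
      = ∫ y : hremIdx n → ℝ,
          Real.log (∑ S : Cfg n, Real.exp (-β * fieldH σ n 0 S (extField n y)))
          ∂(Measure.pi fun _ => gaussianReal 0 1) := by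
  classical
  set X : hremIdx n → Ω → ℝ :=
    fun i => ε (hremEmb n j i).1 (hremEmb n j i).2.1 (hremEmb n j i).2.2 with hX
  have hXm : ∀ i, Measurable (X i) := fun i => hmeas _ _ _
  have hindX : iIndepFun X μ :=
    iIndepFun_precomp hindep (hremEmb_injective n j)
  have hlaw : μ.map (fun ω i => X i ω) = Measure.pi (fun _ : hremIdx n => gaussianReal 0 1) := by
    rw [iIndepFun_map_pi hXm hindX]
    congr 1
    funext i
    exact hgauss _ _ _
  set G : (hremIdx n → ℝ) → ℝ :=
    fun y => Real.log (∑ S : Cfg n, Real.exp (-β * fieldH σ n 0 S (extField n y))) with hG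
  have hGm : Measurable G := by
    apply Real.measurable_log.comp
    exact Finset.measurable_sum _ fun S _ =>
      ((((measurable_fieldH σ n 0 S).comp (measurable_extField n)).const_mul (-β)).exp)
  have hpt : ∀ ω, Real.log (hZ σ ε β n j ω) = G (fun i => X i ω) := by
    intro ω
    rw [hG, hZ]
    congr 1
    refine Finset.sum_congr rfl fun S _ => ?_
    rw [hremH_factor σ ε n j S ω]
  calc ∫ ω, Real.log (hZ σ ε β n j ω) ∂μ = ∫ ω, G (fun i => X i ω) ∂μ := by
        exact integral_congr_ae (ae_of_all _ hpt)
    _ = ∫ y, G y ∂(μ.map (fun ω i => X i ω)) := by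
        rw [integral_map (measurable_pi_lambda _ hXm).aemeasurable hGm.aestronglyMeasurable]
    _ = _ := by rw [hlaw]

lemma u_invariant (hmeas : ∀ l j c, Measurable (ε l j c))
    (hindep : iIndepFun
      (fun q : Σ l : ℕ, ℕ × Cfg l => ε q.1 q.2.1 q.2.2) μ)
    (hgauss : ∀ l j c, μ.map (ε l j c) = gaussianReal 0 1) (n j j' : ℕ) :
    ∫ ω, Real.log (hZ σ ε β n j ω) ∂μ = ∫ ω, Real.log (hZ σ ε β n j' ω) ∂μ := by
  rw [u_repr hmeas hindep hgauss n j, u_repr hmeas hindep hgauss n j']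

lemma integrable_exp_eps (hmeas : ∀ l j c, Measurable (ε l j c))
    (hgauss : ∀ l j c, μ.map (ε l j c) = gaussianReal 0 1) (t : ℝ) (l j : ℕ) (c : Cfg l) :
    Integrable (fun ω => Real.exp (t * ε l j c ω)) μ := by
  have h : Integrable (fun x => Real.exp (t * x)) (μ.map (ε l j c)) := by
    rw [hgauss]; exact _root_.integrable_exp_mul_gaussianReal t
  have hsm : AEStronglyMeasurable (fun x : ℝ => Real.exp (t * x)) (μ.map (ε l j c)) :=
    (Real.measurable_exp.comp (measurable_const.mul measurable_id)).aestronglyMeasurable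
  exact (integrable_map_measure hsm (hmeas l j c).aemeasurable).mp h

lemma integral_exp_eps (hmeas : ∀ l j c, Measurable (ε l j c))
    (hgauss : ∀ l j c, μ.map (ε l j c) = gaussianReal 0 1) (t : ℝ) (l j : ℕ) (c : Cfg l) :
    ∫ ω, Real.exp (t * ε l j c ω) ∂μ = Real.exp (t ^ 2 / 2) := by
  have h : ∫ x, Real.exp (t * x) ∂(μ.map (ε l j c)) = Real.exp (t ^ 2 / 2) := by
    rw [hgauss]; exact integral_exp_mul_gaussianReal t
  have hsm : AEStronglyMeasurable (fun x : ℝ => Real.exp (t * x)) (μ.map (ε l j c)) :=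
    (Real.measurable_exp.comp (measurable_const.mul measurable_id)).aestronglyMeasurable
  rwa [integral_map (hmeas l j c).aemeasurable hsm] at h

end Main2

section Main3

variable {Ω : Type} [MeasurableSpace Ω] {μ : Measure Ω} [IsProbabilityMeasure μ]
  {σ β : ℝ} {ε : ∀ l : ℕ, ℕ → Cfg l → Ω → ℝ}

/-- Auxiliary sum of exponentials controlling the maximum of the level-`(n+1)` energies. -/
noncomputable def mgfX (ε : ∀ l : ℕ, ℕ → Cfg l → Ω → ℝ) (Λ : ℝ) (n : ℕ) (ω : Ω) : ℝ :=
  ∑ S : Cfg (n + 1), (Real.exp (Λ * ε (n + 1) 0 S ω) + Real.exp (-(Λ * ε (n + 1) 0 S ω)))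

lemma mgfX_term_nonneg (Λ : ℝ) (n : ℕ) (ω : Ω) (S : Cfg (n + 1)) :
    (0:ℝ) ≤ Real.exp (Λ * ε (n + 1) 0 S ω) + Real.exp (-(Λ * ε (n + 1) 0 S ω)) :=
  add_nonneg (Real.exp_nonneg _) (Real.exp_nonneg _)

lemma mgfX_two_le (Λ : ℝ) (n : ℕ) (ω : Ω) : 2 ≤ mgfX ε Λ n ω := by
  obtain ⟨S⟩ : Nonempty (Cfg (n + 1)) := ⟨fun _ => true⟩
  refine le_trans ?_ (Finset.single_le_sum
    (f := fun S : Cfg (n+1) => Real.exp (Λ * ε (n + 1) 0 S ω) + Real.exp (-(Λ * ε (n + 1) 0 S ω)))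
    (fun S _ => mgfX_term_nonneg Λ n ω S) (Finset.mem_univ S))
  show (2:ℝ) ≤ Real.exp (Λ * ε (n + 1) 0 S ω) + Real.exp (-(Λ * ε (n + 1) 0 S ω))
  have h1 := Real.add_one_le_exp (Λ * ε (n + 1) 0 S ω)
  have h2 := Real.add_one_le_exp (-(Λ * ε (n + 1) 0 S ω))
  linarith

lemma mgfX_pos (Λ : ℝ) (n : ℕ) (ω : Ω) : 0 < mgfX ε Λ n ω :=
  lt_of_lt_of_le (by norm_num) (mgfX_two_le Λ n ω)

lemma log_mgfX_nonneg (Λ : ℝ) (n : ℕ) (ω : Ω) : 0 ≤ Real.log (mgfX ε Λ n ω) :=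
  Real.log_nonneg (le_trans (by norm_num) (mgfX_two_le Λ n ω))

lemma abs_le_log_mgfX (Λ : ℝ) (n : ℕ) (ω : Ω) (S : Cfg (n + 1)) :
    Λ * |ε (n + 1) 0 S ω| ≤ Real.log (mgfX ε Λ n ω) := by
  rw [← Real.log_exp (Λ * |ε (n + 1) 0 S ω|)]
  apply Real.log_le_log (Real.exp_pos _)
  refine le_trans ?_ (Finset.single_le_sum
    (f := fun S : Cfg (n+1) => Real.exp (Λ * ε (n + 1) 0 S ω) + Real.exp (-(Λ * ε (n + 1) 0 S ω)))
    (fun S _ => mgfX_term_nonneg Λ n ω S) (Finset.mem_univ S))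
  show Real.exp (Λ * |ε (n + 1) 0 S ω|)
    ≤ Real.exp (Λ * ε (n + 1) 0 S ω) + Real.exp (-(Λ * ε (n + 1) 0 S ω))
  rcases abs_cases (ε (n + 1) 0 S ω) with ⟨h, _⟩ | ⟨h, _⟩
  · rw [h]
    exact le_add_of_nonneg_right (Real.exp_nonneg _)
  · rw [h, show Λ * -ε (n + 1) 0 S ω = -(Λ * ε (n + 1) 0 S ω) from by ring]
    exact le_add_of_nonneg_left (Real.exp_nonneg _)

lemma measurable_mgfX (hmeas : ∀ l j c, Measurable (ε l j c)) (Λ : ℝ) (n : ℕ) :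
    Measurable (mgfX ε Λ n) :=
  Finset.measurable_sum _ fun S _ =>
    (((hmeas _ _ _).const_mul _).exp).add ((((hmeas _ _ _).const_mul _).neg).exp)

lemma integrable_mgfX (hmeas : ∀ l j c, Measurable (ε l j c))
    (hgauss : ∀ l j c, μ.map (ε l j c) = gaussianReal 0 1) (Λ : ℝ) (n : ℕ) :
    Integrable (mgfX ε Λ n) μ := by
  refine integrable_finset_sum _ fun S _ => Integrable.add ?_ ?_
  · exact integrable_exp_eps hmeas hgauss Λ _ _ _
  · have := integrable_exp_eps hmeas hgauss (-Λ) (n+1) 0 S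
    refine this.congr (ae_of_all _ fun ω => ?_)
    ring_nf

lemma integral_mgfX (hmeas : ∀ l j c, Measurable (ε l j c))
    (hgauss : ∀ l j c, μ.map (ε l j c) = gaussianReal 0 1) (Λ : ℝ) (n : ℕ) :
    ∫ ω, mgfX ε Λ n ω ∂μ
      = 2 * (Fintype.card (Cfg (n + 1)) : ℝ) * Real.exp (Λ ^ 2 / 2) := by
  simp only [mgfX]
  rw [integral_finset_sum]
  · have h1 : ∀ S : Cfg (n+1), ∫ ω, (Real.exp (Λ * ε (n + 1) 0 S ω)
        + Real.exp (-(Λ * ε (n + 1) 0 S ω))) ∂μ = 2 * Real.exp (Λ ^ 2 / 2) := by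
      intro S
      rw [integral_add (integrable_exp_eps hmeas hgauss Λ _ _ _)]
      · rw [integral_exp_eps hmeas hgauss Λ _ _ _]
        have : ∫ ω, Real.exp (-(Λ * ε (n + 1) 0 S ω)) ∂μ = Real.exp ((-Λ) ^ 2 / 2) := by
          rw [← integral_exp_eps hmeas hgauss (-Λ) (n+1) 0 S]
          exact integral_congr_ae (ae_of_all _ fun ω => by ring_nf)
        rw [this]
        ring_nf
      · have := integrable_exp_eps hmeas hgauss (-Λ) (n+1) 0 S
        refine this.congr (ae_of_all _ fun ω => ?_)
        ring_nf
    rw [Finset.sum_congr rfl fun S _ => h1 S]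
    simp [mul_comm, Finset.card_univ]
    ring
  · intro S _
    refine Integrable.add (integrable_exp_eps hmeas hgauss Λ _ _ _) ?_
    have := integrable_exp_eps hmeas hgauss (-Λ) (n+1) 0 S
    refine this.congr (ae_of_all _ fun ω => ?_)
    ring_nf

lemma integrable_log_mgfX (hmeas : ∀ l j c, Measurable (ε l j c))
    (hgauss : ∀ l j c, μ.map (ε l j c) = gaussianReal 0 1) (Λ : ℝ) (n : ℕ) :
    Integrable (fun ω => Real.log (mgfX ε Λ n ω)) μ := by
  refine Integrable.mono' (integrable_mgfX hmeas hgauss Λ n)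
    ((Real.measurable_log.comp (measurable_mgfX hmeas Λ n)).aestronglyMeasurable)
    (ae_of_all _ fun ω => ?_)
  rw [Real.norm_eq_abs, abs_of_nonneg (log_mgfX_nonneg Λ n ω)]
  have h := Real.log_le_sub_one_of_pos (mgfX_pos (ε := ε) Λ n ω)
  linarith

lemma integral_log_mgfX_le (hmeas : ∀ l j c, Measurable (ε l j c))
    (hgauss : ∀ l j c, μ.map (ε l j c) = gaussianReal 0 1) (Λ : ℝ) (n : ℕ) :
    ∫ ω, Real.log (mgfX ε Λ n ω) ∂μ
      ≤ Real.log (2 * (Fintype.card (Cfg (n + 1)) : ℝ) * Real.exp (Λ ^ 2 / 2)) := by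
  set c₀ : ℝ := 2 * (Fintype.card (Cfg (n + 1)) : ℝ) * Real.exp (Λ ^ 2 / 2) with hc₀
  have hc₀pos : 0 < c₀ := by
    rw [hc₀]
    have : (0:ℝ) < (Fintype.card (Cfg (n + 1)) : ℝ) := by exact_mod_cast Fintype.card_pos
    positivity
  have hpt : ∀ ω, Real.log (mgfX ε Λ n ω) ≤ Real.log c₀ + (mgfX ε Λ n ω / c₀ - 1) := by
    intro ω
    have h1 : Real.log (mgfX ε Λ n ω / c₀) ≤ mgfX ε Λ n ω / c₀ - 1 :=
      Real.log_le_sub_one_of_pos (div_pos (mgfX_pos Λ n ω) hc₀pos)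
    rw [Real.log_div (ne_of_gt (mgfX_pos Λ n ω)) (ne_of_gt hc₀pos)] at h1
    linarith
  have hdiv : Integrable (fun ω => mgfX ε Λ n ω / c₀) μ :=
    (integrable_mgfX hmeas hgauss Λ n).div_const c₀
  have hint2 : Integrable (fun ω => mgfX ε Λ n ω / c₀ - 1) μ := hdiv.sub (integrable_const 1)
  calc ∫ ω, Real.log (mgfX ε Λ n ω) ∂μ
      ≤ ∫ ω, (Real.log c₀ + (mgfX ε Λ n ω / c₀ - 1)) ∂μ := by
        refine integral_mono (integrable_log_mgfX hmeas hgauss Λ n) ?_ hpt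
        exact (integrable_const _).add hint2
    _ = Real.log c₀ + ((∫ ω, mgfX ε Λ n ω ∂μ) / c₀ - 1) := by
        rw [integral_add (integrable_const _) hint2, integral_sub hdiv (integrable_const 1),
          integral_div]
        simp
    _ = Real.log c₀ := by
        rw [integral_mgfX hmeas hgauss Λ n, ← hc₀, div_self (ne_of_gt hc₀pos)]
        ring

end Main3

section Main4

variable {Ω : Type} [MeasurableSpace Ω] {μ : Measure Ω} [IsProbabilityMeasure μ]
  {σ β : ℝ} {ε : ∀ l : ℕ, ℕ → Cfg l → Ω → ℝ}

lemma logZ_diff_pathwise (hβ : 0 ≤ β) {Λ : ℝ} (hΛ : 0 < Λ) (n : ℕ) (ω : Ω) :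
    |Real.log (hZ σ ε β (n + 1) 0 ω) - Real.log (hZ σ ε β n 0 ω) - Real.log (hZ σ ε β n 1 ω)|
      ≤ (β * (2 : ℝ) ^ (((n : ℝ) + 1) * (1 - σ) / 2) / Λ) * Real.log (mgfX ε Λ n ω) := by
  set cc : ℝ := (2 : ℝ) ^ (((n : ℝ) + 1) * (1 - σ) / 2) with hcc
  have hccpos : 0 < cc := Real.rpow_pos_of_pos (by norm_num) _
  set Y : ℝ := Real.log (mgfX ε Λ n ω) / Λ with hY
  have hY0 : 0 ≤ Y := div_nonneg (log_mgfX_nonneg Λ n ω) hΛ.le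
  have habs : ∀ S : Cfg (n + 1), |ε (n + 1) 0 S ω| ≤ Y := by
    intro S
    rw [hY, le_div_iff₀ hΛ]
    have := abs_le_log_mgfX (ε := ε) Λ n ω S
    linarith [this, mul_comm Λ (|ε (n + 1) 0 S ω|)]
  have hH : ∀ S : Cfg (n + 1), hremH σ ε (n + 1) 0 S ω
      = hremH σ ε n 0 (blkL S) ω + hremH σ ε n 1 (blkR S) ω + cc * ε (n + 1) 0 S ω := by
    intro S
    simp only [hremH, hcc]
  set Z1 : ℝ := hZ σ ε β n 0 ω with hZ1
  set Z2 : ℝ := hZ σ ε β n 1 ω with hZ2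
  have hZ1pos : 0 < Z1 := hZ_pos n 0 ω
  have hZ2pos : 0 < Z2 := hZ_pos n 1 ω
  have hsplit : ∀ S : Cfg (n + 1),
      Real.exp (-β * hremH σ ε (n + 1) 0 S ω)
        = Real.exp (-β * hremH σ ε n 0 (blkL S) ω) * Real.exp (-β * hremH σ ε n 1 (blkR S) ω)
            * Real.exp (-β * (cc * ε (n + 1) 0 S ω)) := by
    intro S
    rw [hH S, ← Real.exp_add, ← Real.exp_add]
    congr 1
    ring
  have hprod : ∑ S : Cfg (n + 1),
      Real.exp (-β * hremH σ ε n 0 (blkL S) ω) * Real.exp (-β * hremH σ ε n 1 (blkR S) ω)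
        = Z1 * Z2 := by
    rw [hZ1, hZ2]
    show _ = (∑ a : Cfg n, Real.exp (-β * hremH σ ε n 0 a ω))
      * (∑ b : Cfg n, Real.exp (-β * hremH σ ε n 1 b ω))
    exact sum_cfgPair (fun a => Real.exp (-β * hremH σ ε n 0 a ω))
      (fun b => Real.exp (-β * hremH σ ε n 1 b ω))
  have hterm : ∀ S : Cfg (n + 1),
      Real.exp (-(β * cc * Y)) ≤ Real.exp (-β * (cc * ε (n + 1) 0 S ω)) ∧
      Real.exp (-β * (cc * ε (n + 1) 0 S ω)) ≤ Real.exp (β * cc * Y) := by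
    intro S
    have h1 : |ε (n + 1) 0 S ω| ≤ Y := habs S
    have h2 : -(β * cc) * ε (n + 1) 0 S ω ≤ β * cc * Y := by
      have hb : 0 ≤ β * cc := mul_nonneg hβ hccpos.le
      have := neg_le_abs (ε (n + 1) 0 S ω)
      nlinarith
    have h3 : -(β * cc * Y) ≤ -β * (cc * ε (n + 1) 0 S ω) := by
      have hb : 0 ≤ β * cc := mul_nonneg hβ hccpos.le
      have := le_abs_self (ε (n + 1) 0 S ω)
      nlinarith
    exact ⟨Real.exp_le_exp.mpr h3, Real.exp_le_exp.mpr (by nlinarith [h2])⟩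
  have hup : hZ σ ε β (n + 1) 0 ω ≤ Real.exp (β * cc * Y) * (Z1 * Z2) := by
    show (∑ S : Cfg (n + 1), Real.exp (-β * hremH σ ε (n + 1) 0 S ω)) ≤ _
    calc ∑ S : Cfg (n + 1), Real.exp (-β * hremH σ ε (n + 1) 0 S ω)
        ≤ ∑ S : Cfg (n + 1),
            Real.exp (-β * hremH σ ε n 0 (blkL S) ω) * Real.exp (-β * hremH σ ε n 1 (blkR S) ω)
              * Real.exp (β * cc * Y) := by
          refine Finset.sum_le_sum fun S _ => ?_
          rw [hsplit S]
          exact mul_le_mul_of_nonneg_left ((hterm S).2)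
            (mul_nonneg (Real.exp_nonneg _) (Real.exp_nonneg _))
      _ = Real.exp (β * cc * Y) * (Z1 * Z2) := by
          rw [← Finset.sum_mul, hprod]
          ring
  have hlo : Real.exp (-(β * cc * Y)) * (Z1 * Z2) ≤ hZ σ ε β (n + 1) 0 ω := by
    show _ ≤ ∑ S : Cfg (n + 1), Real.exp (-β * hremH σ ε (n + 1) 0 S ω)
    calc Real.exp (-(β * cc * Y)) * (Z1 * Z2)
        = ∑ S : Cfg (n + 1),
            Real.exp (-β * hremH σ ε n 0 (blkL S) ω) * Real.exp (-β * hremH σ ε n 1 (blkR S) ω)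
              * Real.exp (-(β * cc * Y)) := by
          rw [← Finset.sum_mul, hprod]
          ring
      _ ≤ ∑ S : Cfg (n + 1), Real.exp (-β * hremH σ ε (n + 1) 0 S ω) := by
          refine Finset.sum_le_sum fun S _ => ?_
          rw [hsplit S]
          exact mul_le_mul_of_nonneg_left ((hterm S).1)
            (mul_nonneg (Real.exp_nonneg _) (Real.exp_nonneg _))
  have hZnpos : 0 < hZ σ ε β (n + 1) 0 ω := hZ_pos (n + 1) 0 ω
  have hlogup : Real.log (hZ σ ε β (n + 1) 0 ω) ≤ β * cc * Y + (Real.log Z1 + Real.log Z2) := by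
    have := Real.log_le_log hZnpos hup
    rwa [Real.log_mul (Real.exp_ne_zero _) (mul_pos hZ1pos hZ2pos).ne', Real.log_exp,
      Real.log_mul hZ1pos.ne' hZ2pos.ne'] at this
  have hloglo : -(β * cc * Y) + (Real.log Z1 + Real.log Z2)
      ≤ Real.log (hZ σ ε β (n + 1) 0 ω) := by
    have := Real.log_le_log (mul_pos (Real.exp_pos _) (mul_pos hZ1pos hZ2pos)) hlo
    rwa [Real.log_mul (Real.exp_ne_zero _) (mul_pos hZ1pos hZ2pos).ne', Real.log_exp,
      Real.log_mul hZ1pos.ne' hZ2pos.ne'] at this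
  have hfinal : |Real.log (hZ σ ε β (n + 1) 0 ω) - Real.log Z1 - Real.log Z2| ≤ β * cc * Y := by
    rw [abs_le]
    constructor <;> linarith
  calc |Real.log (hZ σ ε β (n + 1) 0 ω) - Real.log Z1 - Real.log Z2|
      ≤ β * cc * Y := hfinal
    _ = (β * cc / Λ) * Real.log (mgfX ε Λ n ω) := by
        rw [hY]
        field_simp

lemma key_estimate (hβ : 0 ≤ β) (hmeas : ∀ l j c, Measurable (ε l j c))
    (hgauss : ∀ l j c, μ.map (ε l j c) = gaussianReal 0 1)
    (hindep : iIndepFun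
      (fun q : Σ l : ℕ, ℕ × Cfg l => ε q.1 q.2.1 q.2.2) μ) {Λ : ℝ} (hΛ : 0 < Λ) (n : ℕ) :
    |(∫ ω, Real.log (hZ σ ε β (n + 1) 0 ω) ∂μ) - 2 * ∫ ω, Real.log (hZ σ ε β n 0 ω) ∂μ|
      ≤ (β * (2 : ℝ) ^ (((n : ℝ) + 1) * (1 - σ) / 2) / Λ)
          * Real.log (2 * (Fintype.card (Cfg (n + 1)) : ℝ) * Real.exp (Λ ^ 2 / 2)) := by
  set cc : ℝ := (2 : ℝ) ^ (((n : ℝ) + 1) * (1 - σ) / 2) with hcc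
  have hccpos : 0 < cc := Real.rpow_pos_of_pos (by norm_num) _
  have hco : 0 ≤ β * cc / Λ := by positivity
  have hint1 := integrable_logZ (σ := σ) (β := β) hmeas hgauss (n + 1) 0
  have hint2 := integrable_logZ (σ := σ) (β := β) hmeas hgauss n 0
  have hint3 := integrable_logZ (σ := σ) (β := β) hmeas hgauss n 1
  have hinv : ∫ ω, Real.log (hZ σ ε β n 1 ω) ∂μ = ∫ ω, Real.log (hZ σ ε β n 0 ω) ∂μ :=
    u_invariant hmeas hindep hgauss n 1 0
  have hsplit : (∫ ω, Real.log (hZ σ ε β (n + 1) 0 ω) ∂μ)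
        - 2 * ∫ ω, Real.log (hZ σ ε β n 0 ω) ∂μ
      = ∫ ω, (Real.log (hZ σ ε β (n + 1) 0 ω) - Real.log (hZ σ ε β n 0 ω)
          - Real.log (hZ σ ε β n 1 ω)) ∂μ := by
    have hint12 : Integrable (fun ω => Real.log (hZ σ ε β (n + 1) 0 ω)
        - Real.log (hZ σ ε β n 0 ω)) μ := hint1.sub hint2
    rw [integral_sub hint12 hint3, integral_sub hint1 hint2, hinv]
    ring
  rw [hsplit]
  calc |∫ ω, (Real.log (hZ σ ε β (n + 1) 0 ω) - Real.log (hZ σ ε β n 0 ω)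
          - Real.log (hZ σ ε β n 1 ω)) ∂μ|
      ≤ ∫ ω, |Real.log (hZ σ ε β (n + 1) 0 ω) - Real.log (hZ σ ε β n 0 ω)
          - Real.log (hZ σ ε β n 1 ω)| ∂μ := by
        rw [← Real.norm_eq_abs]
        exact (norm_integral_le_integral_norm _).trans_eq (by simp [Real.norm_eq_abs])
    _ ≤ ∫ ω, (β * cc / Λ) * Real.log (mgfX ε Λ n ω) ∂μ := by
        refine integral_mono ((hint1.sub hint2).sub hint3).abs
          ((integrable_log_mgfX hmeas hgauss Λ n).const_mul _) ?_
        intro ω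
        exact logZ_diff_pathwise hβ hΛ n ω
    _ = (β * cc / Λ) * ∫ ω, Real.log (mgfX ε Λ n ω) ∂μ := integral_const_mul _ _
    _ ≤ (β * cc / Λ)
          * Real.log (2 * (Fintype.card (Cfg (n + 1)) : ℝ) * Real.exp (Λ ^ 2 / 2)) :=
        mul_le_mul_of_nonneg_left (integral_log_mgfX_le hmeas hgauss Λ n) hco

end Main4

lemma hrem_numeric_bound {σ β : ℝ} (hσ : 0 < σ) (hβ : 0 ≤ β) (n : ℕ) :
    ((2 : ℝ) ^ (n + 1 : ℕ))⁻¹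
        * ((β * (2 : ℝ) ^ (((n : ℝ) + 1) * (1 - σ) / 2) / (2 : ℝ) ^ (((n : ℝ) + 1) / 2))
          * Real.log (2 * (Fintype.card (Cfg (n + 1)) : ℝ)
              * Real.exp (((2 : ℝ) ^ (((n : ℝ) + 1) / 2)) ^ 2 / 2)))
      ≤ 8 * β * ((2 : ℝ) ^ (-σ / 2)) ^ (n + 1 : ℕ) := by
  set a : ℝ := (n : ℝ) + 1 with ha
  have htwo : (0:ℝ) < 2 := by norm_num
  have hΛ : (0:ℝ) < (2 : ℝ) ^ (a / 2) := Real.rpow_pos_of_pos htwo _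
  have hcc : (0:ℝ) < (2 : ℝ) ^ (a * (1 - σ) / 2) := Real.rpow_pos_of_pos htwo _
  -- the cardinality
  have hcard : (Fintype.card (Cfg (n + 1)) : ℝ) = (2 : ℝ) ^ (2 ^ (n + 1) : ℕ) := by
    rw [show Fintype.card (Cfg (n + 1)) = 2 ^ (2 ^ (n + 1)) from by
      rw [Fintype.card_fun]; simp]
    push_cast
    ring
  -- Λ² = 2^(n+1)
  have hΛsq : ((2 : ℝ) ^ (a / 2)) ^ 2 = (2 : ℝ) ^ (n + 1 : ℕ) := by
    rw [← Real.rpow_natCast ((2:ℝ) ^ (a / 2)) 2, ← Real.rpow_mul htwo.le]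
    rw [show a / 2 * (2:ℕ) = a from by push_cast; ring]
    rw [ha, show (n : ℝ) + 1 = ((n + 1 : ℕ) : ℝ) from by push_cast; ring, Real.rpow_natCast]
  -- the log term and its bound
  have hlogpos : (0:ℝ) < 2 * (Fintype.card (Cfg (n + 1)) : ℝ) := by
    have : (0:ℝ) < (Fintype.card (Cfg (n + 1)) : ℝ) := by exact_mod_cast Fintype.card_pos
    linarith
  have hlog : Real.log (2 * (Fintype.card (Cfg (n + 1)) : ℝ)
        * Real.exp (((2 : ℝ) ^ (a / 2)) ^ 2 / 2))
      = Real.log 2 + (2 ^ (n + 1) : ℕ) * Real.log 2 + (2 : ℝ) ^ (n + 1 : ℕ) / 2 := by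
    rw [Real.log_mul hlogpos.ne' (Real.exp_ne_zero _), Real.log_exp, hΛsq, hcard,
      Real.log_mul htwo.ne' (by positivity), Real.log_pow]
  have hlog2 : Real.log 2 ≤ 1 := by
    have := Real.log_le_sub_one_of_pos htwo
    linarith
  have hlog2pos : (0:ℝ) ≤ Real.log 2 := Real.log_nonneg (by norm_num)
  have hpow1 : ((2:ℝ) ^ (n + 1 : ℕ)) = 2 * 2 ^ (n : ℕ) := by rw [pow_succ]; ring
  have hpow3 : ((2:ℝ) ^ (n + 3 : ℕ)) = 8 * 2 ^ (n : ℕ) := by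
    rw [show n + 3 = n + 3 from rfl, pow_add]; ring
  have hpown : (1:ℝ) ≤ 2 ^ (n : ℕ) := one_le_pow₀ (by norm_num)
  have hL : Real.log 2 + (2 ^ (n + 1) : ℕ) * Real.log 2 + (2 : ℝ) ^ (n + 1 : ℕ) / 2
      ≤ (2:ℝ) ^ (n + 3 : ℕ) := by
    have hc : ((2 ^ (n + 1) : ℕ) : ℝ) = (2:ℝ) ^ (n + 1 : ℕ) := by push_cast; ring
    rw [hc, hpow1, hpow3]
    nlinarith
  -- the prefactor
  have hP : ((2 : ℝ) ^ (n + 1 : ℕ))⁻¹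
        * ((2 : ℝ) ^ (a * (1 - σ) / 2) / (2 : ℝ) ^ (a / 2))
      = (2 : ℝ) ^ (-a + (a * (1 - σ) / 2 - a / 2)) := by
    rw [← Real.rpow_natCast (2:ℝ) (n + 1),
      show ((n + 1 : ℕ) : ℝ) = a from by rw [ha]; push_cast; ring,
      ← Real.rpow_neg htwo.le, ← Real.rpow_sub htwo, ← Real.rpow_add htwo]
  have hPalt : (-a + (a * (1 - σ) / 2 - a / 2)) = -(a * σ / 2) - a := by ring
  -- put it together
  have hexp : (2:ℝ) ^ (-(a * σ / 2) - a) * (2:ℝ) ^ ((n + 3 : ℕ) : ℝ)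
      = 4 * ((2:ℝ) ^ (-σ / 2)) ^ (n + 1 : ℕ) := by
    rw [← Real.rpow_add htwo]
    have h1 : ((2:ℝ) ^ (-σ / 2)) ^ (n + 1 : ℕ) = (2:ℝ) ^ (-σ / 2 * a) := by
      rw [← Real.rpow_natCast ((2:ℝ) ^ (-σ / 2)) (n + 1), ← Real.rpow_mul htwo.le]
      congr 1
      rw [ha]; push_cast; ring
    rw [h1, show -(a * σ / 2) - a + ((n + 3 : ℕ) : ℝ) = 2 + -σ / 2 * a from by
      rw [ha]; push_cast; ring, Real.rpow_add htwo]
    norm_num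
  calc ((2 : ℝ) ^ (n + 1 : ℕ))⁻¹
        * ((β * (2 : ℝ) ^ (a * (1 - σ) / 2) / (2 : ℝ) ^ (a / 2))
          * Real.log (2 * (Fintype.card (Cfg (n + 1)) : ℝ)
              * Real.exp (((2 : ℝ) ^ (a / 2)) ^ 2 / 2)))
      = β * (((2 : ℝ) ^ (n + 1 : ℕ))⁻¹ * ((2 : ℝ) ^ (a * (1 - σ) / 2) / (2 : ℝ) ^ (a / 2)))
          * Real.log (2 * (Fintype.card (Cfg (n + 1)) : ℝ)
              * Real.exp (((2 : ℝ) ^ (a / 2)) ^ 2 / 2)) := by ring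
    _ ≤ β * (((2 : ℝ) ^ (n + 1 : ℕ))⁻¹ * ((2 : ℝ) ^ (a * (1 - σ) / 2) / (2 : ℝ) ^ (a / 2)))
          * (2:ℝ) ^ (n + 3 : ℕ) := by
        refine mul_le_mul_of_nonneg_left ?_ (by positivity)
        rw [hlog]
        exact hL
    _ = β * ((2:ℝ) ^ (-(a * σ / 2) - a) * (2:ℝ) ^ ((n + 3 : ℕ) : ℝ)) := by
        rw [hP, hPalt, Real.rpow_natCast]
        ring
    _ = β * (4 * ((2:ℝ) ^ (-σ / 2)) ^ (n + 1 : ℕ)) := by rw [hexp]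
    _ ≤ 8 * β * ((2 : ℝ) ^ (-σ / 2)) ^ (n + 1 : ℕ) := by
        have : (0:ℝ) ≤ ((2:ℝ) ^ (-σ / 2)) ^ (n + 1 : ℕ) := by positivity
        nlinarith

/-- **Existence of the thermodynamic limit of the HREM free energy.** For `σ > 0` and
`β ≥ 0`, the limit `f = lim_{k→∞} f_{k+1}` exists (and is finite). -/
theorem hremF_limit_exists
    (σ β : ℝ) (hσ : 0 < σ) (hβ : 0 ≤ β) (μ : Measure Ω) [IsProbabilityMeasure μ]
    (ε : ∀ l : ℕ, ℕ → Cfg l → Ω → ℝ)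
    (hmeas : ∀ l j c, Measurable (ε l j c))
    (hgauss : ∀ l j c, μ.map (ε l j c) = gaussianReal 0 1)
    (hindep : iIndepFun
      (fun q : Σ l : ℕ, ℕ × Cfg l => ε q.1 q.2.1 q.2.2) μ) :
    ∃ f : ℝ, Tendsto (fun k => hremF σ ε μ β (k + 1)) atTop (nhds f) := by

  have hr0 : (0:ℝ) < (2:ℝ) ^ (-σ / 2) := Real.rpow_pos_of_pos (by norm_num) _
  have hr1 : (2:ℝ) ^ (-σ / 2) < 1 :=
    Real.rpow_lt_one_of_one_lt_of_neg (by norm_num) (by linarith)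
  have hstep : ∀ n : ℕ, |hremF σ ε μ β (n + 1) - hremF σ ε μ β n|
      ≤ 8 * β * ((2:ℝ) ^ (-σ / 2)) ^ (n + 1 : ℕ) := by
    intro n
    have hΛ : (0:ℝ) < (2:ℝ) ^ (((n:ℝ) + 1) / 2) := Real.rpow_pos_of_pos (by norm_num) _
    have hkey := key_estimate (σ := σ) hβ hmeas hgauss hindep hΛ n
    have hF : ∀ m : ℕ, hremF σ ε μ β m
        = ((2:ℝ) ^ (m : ℕ))⁻¹ * ∫ ω, Real.log (hZ σ ε β m 0 ω) ∂μ := fun m => rfl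
    rw [hF (n + 1), hF n]
    have h2pos : (0:ℝ) < (2:ℝ) ^ (n + 1 : ℕ) := by positivity
    have h2 : ((2:ℝ) ^ (n + 1 : ℕ))⁻¹ * (∫ ω, Real.log (hZ σ ε β (n + 1) 0 ω) ∂μ)
          - ((2:ℝ) ^ (n : ℕ))⁻¹ * ∫ ω, Real.log (hZ σ ε β n 0 ω) ∂μ
        = ((2:ℝ) ^ (n + 1 : ℕ))⁻¹ * ((∫ ω, Real.log (hZ σ ε β (n + 1) 0 ω) ∂μ)
            - 2 * ∫ ω, Real.log (hZ σ ε β n 0 ω) ∂μ) := by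
      rw [pow_succ]
      have hnpos : (0:ℝ) < (2:ℝ) ^ (n : ℕ) := by positivity
      field_simp
    rw [h2, abs_mul, abs_of_nonneg (inv_nonneg.mpr h2pos.le)]
    calc ((2:ℝ) ^ (n + 1 : ℕ))⁻¹ * |(∫ ω, Real.log (hZ σ ε β (n + 1) 0 ω) ∂μ)
            - 2 * ∫ ω, Real.log (hZ σ ε β n 0 ω) ∂μ|
        ≤ ((2:ℝ) ^ (n + 1 : ℕ))⁻¹
            * ((β * (2 : ℝ) ^ (((n : ℝ) + 1) * (1 - σ) / 2) / (2:ℝ) ^ (((n:ℝ) + 1) / 2))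
              * Real.log (2 * (Fintype.card (Cfg (n + 1)) : ℝ)
                  * Real.exp (((2:ℝ) ^ (((n:ℝ) + 1) / 2)) ^ 2 / 2))) :=
          mul_le_mul_of_nonneg_left hkey (inv_nonneg.mpr h2pos.le)
      _ ≤ 8 * β * ((2:ℝ) ^ (-σ / 2)) ^ (n + 1 : ℕ) := hrem_numeric_bound hσ hβ n
  have hcauchy : CauchySeq (fun k => hremF σ ε μ β (k + 1)) := by
    apply cauchySeq_of_le_geometric ((2:ℝ) ^ (-σ / 2))
      (8 * β * ((2:ℝ) ^ (-σ / 2)) ^ 2) hr1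
    intro k
    have := hstep (k + 1)
    rw [Real.dist_eq, abs_sub_comm]
    calc |hremF σ ε μ β (k + 1 + 1) - hremF σ ε μ β (k + 1)|
        ≤ 8 * β * ((2:ℝ) ^ (-σ / 2)) ^ (k + 1 + 1 : ℕ) := hstep (k + 1)
      _ = 8 * β * ((2:ℝ) ^ (-σ / 2)) ^ 2 * ((2:ℝ) ^ (-σ / 2)) ^ (k : ℕ) := by
          rw [show k + 1 + 1 = 2 + k from by omega, pow_add]
          ring
  obtain ⟨f, hf⟩ := cauchySeq_tendsto_of_complete hcauchy
  exact ⟨f, hf⟩
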